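/- Let s ≥ 2, m ≥ 0, k ≥ 1 and 2 ≤ i ≤ min(2s+m, k). With σ_j(s,m,k) denoting the number of pairs (α,β) ∈ F_2^{s+k−1} × F_2^{s+m+k−1} such that rank M(s−1, s+m−1, k) = rank M(s, s+m−1, k) = rank M(s, s+m, k) = j, the following recurrence holds in ℤ: Γ_i^{[s,s+m]×k} = 2·Γ_{i−1}^{[s−1, s+m]×k} + 4·Γ_{i−1}^{[s, s+m−1]×k} − 8·Γ_{i−2}^{[s−1, s+m−1]×k} + σ_i(s,m,k) − 3·σ_{i−1}(s,m,k) + 2·σ_{i−2}(s,m,k). -/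

import Mathlib

open Matrix

/-- The `a × k` Hankel (persymmetric) matrix over `F_2` whose `(i,j)` entry is `α (i+j)`. -/
def hankel (a k : ℕ) (α : Fin (a + k - 1) → ZMod 2) :
    Matrix (Fin a) (Fin k) (ZMod 2) :=
  Matrix.of fun i j => α ⟨(i : ℕ) + (j : ℕ), by have := i.isLt; have := j.isLt; omega⟩

/-- `Γ_i^{[a,b]×k}` : the number of pairs `(α, β)` such that the `(a+b) × k` matrix obtained
by stacking the `a × k` Hankel matrix of `α` on top of the `b × k` Hankel matrix of `β`
has rank `i` over `F_2`. -/
noncomputable def Gamma (a b k i : ℕ) : ℕ :=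
  Nat.card {p : (Fin (a + k - 1) → ZMod 2) × (Fin (b + k - 1) → ZMod 2) //
    (Matrix.fromRows (hankel a k p.1) (hankel b k p.2)).rank = i}

/-- The submatrix `M(a', b', k')` of the double persymmetric matrix `D(α, β)`:
its rows are the first `a'` rows of the `α`-Hankel block and the first `b'` rows of the
`β`-Hankel block, and it keeps the first `k'` columns. -/
def subMat (s m k a' b' k' : ℕ) (α : Fin (s + k - 1) → ZMod 2)
    (β : Fin (s + m + k - 1) → ZMod 2) :
    Matrix (Fin a' ⊕ Fin b') (Fin k') (ZMod 2) :=
  Matrix.of fun r j =>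
    Sum.elim
      (fun i : Fin a' =>
        if h : (i : ℕ) + (j : ℕ) < s + k - 1 then α ⟨(i : ℕ) + (j : ℕ), h⟩ else 0)
      (fun i : Fin b' =>
        if h : (i : ℕ) + (j : ℕ) < s + m + k - 1 then β ⟨(i : ℕ) + (j : ℕ), h⟩ else 0) r

/-- The rank over `F_2` of the submatrix `M(a', b', k')`. -/
noncomputable def subRank (s m k a' b' k' : ℕ) (α : Fin (s + k - 1) → ZMod 2)
    (β : Fin (s + m + k - 1) → ZMod 2) : ℕ :=
  (subMat s m k a' b' k' α β).rank

/-- `σ_j(s,m,k)` : the number of pairs `(α, β)` such that the three nested submatrices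
`M(s-1, s+m-1, k)`, `M(s, s+m-1, k)` and `M(s, s+m, k)` all have rank `j`. -/
noncomputable def sigma3 (s m k j : ℕ) : ℕ :=
  Nat.card {p : (Fin (s + k - 1) → ZMod 2) × (Fin (s + m + k - 1) → ZMod 2) //
    subRank s m k (s - 1) (s + m - 1) k p.1 p.2 = j ∧
    subRank s m k s (s + m - 1) k p.1 p.2 = j ∧
    subRank s m k s (s + m) k p.1 p.2 = j}

namespace GammaRec

open Submodule Module

/-- The `i`-th row of the `α`-Hankel block, as a vector in `Fin k → ZMod 2`. -/
def Ar (s k : ℕ) (α : Fin (s + k - 1) → ZMod 2) (i : ℕ) : Fin k → ZMod 2 :=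
  fun j => if h : i + (j : ℕ) < s + k - 1 then α ⟨i + (j : ℕ), h⟩ else 0

/-- The `i`-th row of the `β`-Hankel block. -/
def Br (s m k : ℕ) (β : Fin (s + m + k - 1) → ZMod 2) (i : ℕ) : Fin k → ZMod 2 :=
  fun j => if h : i + (j : ℕ) < s + m + k - 1 then β ⟨i + (j : ℕ), h⟩ else 0

/-- Row span of the submatrix `M(a', b', k)`. -/
def Sp (s m k a' b' : ℕ) (α : Fin (s + k - 1) → ZMod 2)
    (β : Fin (s + m + k - 1) → ZMod 2) : Submodule (ZMod 2) (Fin k → ZMod 2) :=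
  Submodule.span (ZMod 2) (Ar s k α '' Set.Iio a' ∪ Br s m k β '' Set.Iio b')

lemma fin_range_image {X : Type*} (f : ℕ → X) (a : ℕ) :
    Set.range (fun i : Fin a => f (i : ℕ)) = f '' Set.Iio a := by
  ext x
  constructor
  · rintro ⟨i, rfl⟩; exact ⟨i, i.2, rfl⟩
  · rintro ⟨n, hn, rfl⟩; exact ⟨⟨n, hn⟩, rfl⟩

lemma subRank_eq (s m k a' b' : ℕ) (α : Fin (s + k - 1) → ZMod 2)
    (β : Fin (s + m + k - 1) → ZMod 2) :
    subRank s m k a' b' k α β = finrank (ZMod 2) (Sp s m k a' b' α β) := by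
  have hM : (subMat s m k a' b' k α β : Fin a' ⊕ Fin b' → Fin k → ZMod 2)
      = Sum.elim (fun i : Fin a' => Ar s k α (i : ℕ)) (fun i : Fin b' => Br s m k β (i : ℕ)) := by
    funext r
    cases r with
    | inl i => rfl
    | inr i => rfl
  have hr : Set.range (subMat s m k a' b' k α β)
      = Ar s k α '' Set.Iio a' ∪ Br s m k β '' Set.Iio b' := by
    rw [hM, Set.Sum.elim_range, fin_range_image, fin_range_image]
  rw [subRank, Matrix.rank_eq_finrank_span_row]
  exact congrArg (fun S => finrank (ZMod 2) ↥(Submodule.span (ZMod 2) S)) hr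

lemma Sp_left (s m k a' b' : ℕ) (ha : 1 ≤ a') (α : Fin (s + k - 1) → ZMod 2)
    (β : Fin (s + m + k - 1) → ZMod 2) :
    Sp s m k a' b' α β
      = Sp s m k (a' - 1) b' α β ⊔ Submodule.span (ZMod 2) {Ar s k α (a' - 1)} := by
  have h1 : Set.Iio a' = insert (a' - 1) (Set.Iio (a' - 1)) := by
    ext n; simp only [Set.mem_Iio, Set.mem_insert_iff]; omega
  rw [Sp, Sp, h1, Set.image_insert_eq, Set.insert_union, Submodule.span_insert, sup_comm]

lemma Sp_right (s m k a' b' : ℕ) (hb : 1 ≤ b') (α : Fin (s + k - 1) → ZMod 2)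
    (β : Fin (s + m + k - 1) → ZMod 2) :
    Sp s m k a' b' α β
      = Sp s m k a' (b' - 1) α β ⊔ Submodule.span (ZMod 2) {Br s m k β (b' - 1)} := by
  have h1 : Set.Iio b' = insert (b' - 1) (Set.Iio (b' - 1)) := by
    ext n; simp only [Set.mem_Iio, Set.mem_insert_iff]; omega
  rw [Sp, Sp, h1, Set.image_insert_eq, Set.union_insert, Submodule.span_insert, sup_comm]


----------------------------------------------------------------
-- generic submodule lemmas over `ZMod 2`
----------------------------------------------------------------
section SubLemmas

variable {k : ℕ}

local notation "V" => Fin k → ZMod 2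

lemma add_self_zmod2 (v : V) : v + v = 0 := by
  funext j
  exact CharTwo.add_self_eq_zero (v j)

lemma fr_mono (W : Submodule (ZMod 2) V) (x : V) :
    finrank (ZMod 2) W ≤ finrank (ZMod 2) ↥(W ⊔ Submodule.span (ZMod 2) {x}) :=
  Submodule.finrank_mono le_sup_left

lemma fr_succ (W : Submodule (ZMod 2) V) (x : V) :
    finrank (ZMod 2) ↥(W ⊔ Submodule.span (ZMod 2) {x}) ≤ finrank (ZMod 2) W + 1 := by
  refine (Submodule.finrank_add_le_finrank_add_finrank W _).trans ?_
  gcongr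
  by_cases hx : x = 0
  · subst hx; rw [Submodule.span_zero_singleton]; simp
  · rw [finrank_span_singleton hx]

lemma sup_eq_of_mem {W : Submodule (ZMod 2) V} {x : V} (hx : x ∈ W) :
    W ⊔ Submodule.span (ZMod 2) {x} = W :=
  sup_eq_left.2 ((Submodule.span_singleton_le_iff_mem x W).2 hx)

lemma fr_lt_of_not_mem {W : Submodule (ZMod 2) V} {x : V} (hx : x ∉ W) :
    finrank (ZMod 2) W < finrank (ZMod 2) ↥(W ⊔ Submodule.span (ZMod 2) {x}) := by
  apply Submodule.finrank_lt_finrank_of_lt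
  refine lt_of_le_of_ne le_sup_left fun h => hx ?_
  rw [h]
  exact Submodule.mem_sup_right (Submodule.mem_span_singleton_self x)

lemma fr_eq_succ_of_not_mem {W : Submodule (ZMod 2) V} {x : V} (hx : x ∉ W) :
    finrank (ZMod 2) ↥(W ⊔ Submodule.span (ZMod 2) {x}) = finrank (ZMod 2) W + 1 :=
  le_antisymm (fr_succ W x) (fr_lt_of_not_mem hx)

lemma mem_sup_char {W : Submodule (ZMod 2) V} {u v : V}
    (hu : u ∈ W ⊔ Submodule.span (ZMod 2) {v}) : u ∈ W ∨ u + v ∈ W := by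
  rcases Submodule.mem_sup.1 hu with ⟨w, hw, z, hz, rfl⟩
  rcases Submodule.mem_span_singleton.1 hz with ⟨c, rfl⟩
  have hc : c • v = 0 ∨ c • v = v := by
    rcases (by decide : ∀ c : ZMod 2, c = 0 ∨ c = 1) c with rfl | rfl
    · left; exact zero_smul _ v
    · right; exact one_smul _ v
  rcases hc with h | h <;> rw [h]
  · left; simpa using hw
  · right; rw [add_assoc, add_self_zmod2, add_zero]; exact hw

lemma sup_span_add {W : Submodule (ZMod 2) V} {v : V} (hv : v ∈ W) (u : V) :
    W ⊔ Submodule.span (ZMod 2) {u + v} = W ⊔ Submodule.span (ZMod 2) {u} := by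
  apply le_antisymm
  · refine sup_le le_sup_left ((Submodule.span_singleton_le_iff_mem _ _).2 ?_)
    exact add_mem (Submodule.mem_sup_right (Submodule.mem_span_singleton_self u))
      (Submodule.mem_sup_left hv)
  · refine sup_le le_sup_left ((Submodule.span_singleton_le_iff_mem _ _).2 ?_)
    have h2 : (u + v) + v ∈ W ⊔ Submodule.span (ZMod 2) {u + v} :=
      add_mem (Submodule.mem_sup_right (Submodule.mem_span_singleton_self (u + v)))
        (Submodule.mem_sup_left hv)
    rwa [add_assoc, add_self_zmod2, add_zero] at h2

end SubLemmas

----------------------------------------------------------------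
-- the involution `Φ(α, β) = (α + shiftₘ β, β)`
----------------------------------------------------------------

/-- The shift of `β` by `m`, living in the `α`-index space. -/
def shift (s m k : ℕ) (β : Fin (s + m + k - 1) → ZMod 2) : Fin (s + k - 1) → ZMod 2 :=
  fun x => β ⟨(x : ℕ) + m, by have := x.isLt; omega⟩

lemma Ar_add_shift (s m k : ℕ) (α : Fin (s + k - 1) → ZMod 2)
    (β : Fin (s + m + k - 1) → ZMod 2) (i : ℕ) :
    Ar s k (α + shift s m k β) i = Ar s k α i + Br s m k β (i + m) := by
  funext j
  show (if h : i + (j : ℕ) < s + k - 1 then (α + shift s m k β) ⟨i + (j : ℕ), h⟩ else 0)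
    = Ar s k α i j + Br s m k β (i + m) j
  by_cases h : i + (j : ℕ) < s + k - 1
  · rw [dif_pos h, Ar, Br]
    rw [dif_pos h, dif_pos (show i + m + (j : ℕ) < s + m + k - 1 by omega)]
    show α _ + β _ = α _ + β _
    congr 2
    exact Fin.ext (by simp [shift]; omega)
  · rw [dif_neg h, Ar, Br, dif_neg h,
      dif_neg (show ¬ i + m + (j : ℕ) < s + m + k - 1 by omega), add_zero]

lemma add_shift_shift (s m k : ℕ) (α : Fin (s + k - 1) → ZMod 2)
    (β : Fin (s + m + k - 1) → ZMod 2) :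
    (α + shift s m k β) + shift s m k β = α := by
  funext x
  show (α x + shift s m k β x) + shift s m k β x = α x
  rw [add_assoc, CharTwo.add_self_eq_zero, add_zero]

lemma Sp_phi_le (s m k a' b' : ℕ) (hb : ∀ i, i < a' → i + m < b')
    (α : Fin (s + k - 1) → ZMod 2) (β : Fin (s + m + k - 1) → ZMod 2) :
    Sp s m k a' b' (α + shift s m k β) β ≤ Sp s m k a' b' α β := by
  rw [Sp, Submodule.span_le]
  rintro x (⟨i, hi, rfl⟩ | ⟨i, hi, rfl⟩)
  · rw [Ar_add_shift]
    exact add_mem (Submodule.subset_span (Or.inl ⟨i, hi, rfl⟩))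
      (Submodule.subset_span (Or.inr ⟨i + m, hb i hi, rfl⟩))
  · exact Submodule.subset_span (Or.inr ⟨i, hi, rfl⟩)

lemma Sp_phi_eq (s m k a' b' : ℕ) (hb : ∀ i, i < a' → i + m < b')
    (α : Fin (s + k - 1) → ZMod 2) (β : Fin (s + m + k - 1) → ZMod 2) :
    Sp s m k a' b' (α + shift s m k β) β = Sp s m k a' b' α β := by
  refine le_antisymm (Sp_phi_le s m k a' b' hb α β) ?_
  have h2 := Sp_phi_le s m k a' b' hb (α + shift s m k β) β
  rwa [add_shift_shift] at h2

----------------------------------------------------------------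
-- the local counting function and its arithmetic
----------------------------------------------------------------
def Gfun (i r1 r2 r3 r4 : ℕ) : ℤ :=
  (if r4 = i then 1 else 0) - (if r3 = i - 1 then 1 else 0)
  - 2 * (if r2 = i - 1 then 1 else 0) + 2 * (if r1 = i - 2 then 1 else 0)
  - (if r1 = i ∧ r2 = i ∧ r4 = i then 1 else 0)
  + 3 * (if r1 = i - 1 ∧ r2 = i - 1 ∧ r4 = i - 1 then 1 else 0)
  - 2 * (if r1 = i - 2 ∧ r2 = i - 2 ∧ r4 = i - 2 then 1 else 0)

lemma GA (i t q2 : ℕ) (hi : 2 ≤ i) (h1 : t ≤ q2) (h2 : q2 ≤ t + 1) :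
    Gfun i t q2 t q2 = 0 := by
  have hq : q2 = t ∨ q2 = t + 1 := by omega
  rcases hq with rfl | rfl
  · unfold Gfun
    simp only [show (q2 = i ∧ q2 = i ∧ q2 = i) ↔ q2 = i by tauto,
      show (q2 = i - 1 ∧ q2 = i - 1 ∧ q2 = i - 1) ↔ q2 = i - 1 by tauto,
      show (q2 = i - 2 ∧ q2 = i - 2 ∧ q2 = i - 2) ↔ q2 = i - 2 by tauto]
    split_ifs <;> omega
  · unfold Gfun
    simp only [show (t = i ∧ t + 1 = i ∧ t + 1 = i) ↔ False by constructor <;> [omega; tauto],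
      show (t = i - 1 ∧ t + 1 = i - 1 ∧ t + 1 = i - 1) ↔ False by
        constructor <;> [omega; tauto],
      show (t = i - 2 ∧ t + 1 = i - 2 ∧ t + 1 = i - 2) ↔ False by
        constructor <;> [omega; tauto], if_false]
    split_ifs <;> omega

lemma GB (i t : ℕ) (hi : 2 ≤ i) :
    Gfun i t t (t + 1) (t + 1) + Gfun i t (t + 1) (t + 1) (t + 1) = 0 := by
  unfold Gfun
  simp only [show (t = i ∧ t = i ∧ t + 1 = i) ↔ False by constructor <;> [omega; tauto],
    show (t = i - 1 ∧ t = i - 1 ∧ t + 1 = i - 1) ↔ False by constructor <;> [omega; tauto],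
    show (t = i - 2 ∧ t = i - 2 ∧ t + 1 = i - 2) ↔ False by constructor <;> [omega; tauto],
    show (t = i ∧ t + 1 = i ∧ t + 1 = i) ↔ False by constructor <;> [omega; tauto],
    show (t = i - 1 ∧ t + 1 = i - 1 ∧ t + 1 = i - 1) ↔ False by constructor <;> [omega; tauto],
    show (t = i - 2 ∧ t + 1 = i - 2 ∧ t + 1 = i - 2) ↔ False by constructor <;> [omega; tauto],
    if_false]
  split_ifs <;> omega

lemma GC (i t : ℕ) (hi : 2 ≤ i) :
    Gfun i t (t + 1) (t + 1) (t + 2) = 0 := by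
  unfold Gfun
  simp only [show (t = i ∧ t + 1 = i ∧ t + 2 = i) ↔ False by constructor <;> [omega; tauto],
    show (t = i - 1 ∧ t + 1 = i - 1 ∧ t + 2 = i - 1) ↔ False by constructor <;> [omega; tauto],
    show (t = i - 2 ∧ t + 1 = i - 2 ∧ t + 2 = i - 2) ↔ False by constructor <;> [omega; tauto],
    if_false]
  split_ifs <;> omega

----------------------------------------------------------------
-- the pointwise identity
----------------------------------------------------------------
lemma pointwise (s m k i : ℕ) (hs : 2 ≤ s) (hi : 2 ≤ i)
    (α : Fin (s + k - 1) → ZMod 2) (β : Fin (s + m + k - 1) → ZMod 2) :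
    Gfun i (subRank s m k (s - 1) (s + m - 1) k α β) (subRank s m k s (s + m - 1) k α β)
        (subRank s m k (s - 1) (s + m) k α β) (subRank s m k s (s + m) k α β)
      + Gfun i (subRank s m k (s - 1) (s + m - 1) k (α + shift s m k β) β)
          (subRank s m k s (s + m - 1) k (α + shift s m k β) β)
          (subRank s m k (s - 1) (s + m) k (α + shift s m k β) β)
          (subRank s m k s (s + m) k (α + shift s m k β) β) = 0 := by
  set W := Sp s m k (s - 1) (s + m - 1) α β with hW
  set u := Ar s k α (s - 1) with hu
  set v := Br s m k β (s + m - 1) with hv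
  have e1 : subRank s m k (s - 1) (s + m - 1) k α β = finrank (ZMod 2) W :=
    subRank_eq s m k _ _ α β
  have e2 : subRank s m k s (s + m - 1) k α β
      = finrank (ZMod 2) ↥(W ⊔ Submodule.span (ZMod 2) {u}) := by
    rw [subRank_eq, Sp_left s m k s (s + m - 1) (by omega)]
  have e3 : subRank s m k (s - 1) (s + m) k α β
      = finrank (ZMod 2) ↥(W ⊔ Submodule.span (ZMod 2) {v}) := by
    rw [subRank_eq, Sp_right s m k (s - 1) (s + m) (by omega)]
  have e4 : subRank s m k s (s + m) k α β
      = finrank (ZMod 2) ↥((W ⊔ Submodule.span (ZMod 2) {v}) ⊔ Submodule.span (ZMod 2) {u}) := by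
    rw [subRank_eq, Sp_left s m k s (s + m) (by omega),
      Sp_right s m k (s - 1) (s + m) (by omega)]
  have f1 : subRank s m k (s - 1) (s + m - 1) k (α + shift s m k β) β = finrank (ZMod 2) W := by
    rw [subRank_eq, Sp_phi_eq s m k (s - 1) (s + m - 1) (fun i hi => by omega)]
  have f3 : subRank s m k (s - 1) (s + m) k (α + shift s m k β) β
      = finrank (ZMod 2) ↥(W ⊔ Submodule.span (ZMod 2) {v}) := by
    rw [subRank_eq, Sp_phi_eq s m k (s - 1) (s + m) (fun i hi => by omega),
      Sp_right s m k (s - 1) (s + m) (by omega)]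
  have f4 : subRank s m k s (s + m) k (α + shift s m k β) β
      = finrank (ZMod 2) ↥((W ⊔ Submodule.span (ZMod 2) {v}) ⊔ Submodule.span (ZMod 2) {u}) := by
    rw [subRank_eq, Sp_phi_eq s m k s (s + m) (fun i hi => by omega),
      Sp_left s m k s (s + m) (by omega), Sp_right s m k (s - 1) (s + m) (by omega)]
  have f2 : subRank s m k s (s + m - 1) k (α + shift s m k β) β
      = finrank (ZMod 2) ↥(W ⊔ Submodule.span (ZMod 2) {u + v}) := by
    rw [subRank_eq, Sp_left s m k s (s + m - 1) (by omega),
      Sp_phi_eq s m k (s - 1) (s + m - 1) (fun i hi => by omega),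
      Ar_add_shift s m k α β (s - 1), show s - 1 + m = s + m - 1 by omega]
  rw [e1, e2, e3, e4, f1, f2, f3, f4]
  by_cases hvW : v ∈ W
  · rw [sup_eq_of_mem hvW, sup_span_add hvW u]
    have h0 := GA i (finrank (ZMod 2) W)
      (finrank (ZMod 2) ↥(W ⊔ Submodule.span (ZMod 2) {u})) hi (fr_mono W u) (fr_succ W u)
    linarith
  · have h3v : finrank (ZMod 2) ↥(W ⊔ Submodule.span (ZMod 2) {v}) = finrank (ZMod 2) W + 1 :=
      fr_eq_succ_of_not_mem hvW
    by_cases huWv : u ∈ W ⊔ Submodule.span (ZMod 2) {v}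
    · have h4 : (W ⊔ Submodule.span (ZMod 2) {v}) ⊔ Submodule.span (ZMod 2) {u}
          = W ⊔ Submodule.span (ZMod 2) {v} := sup_eq_of_mem huWv
      rcases mem_sup_char huWv with huW | huvW
      · have huv : u + v ∉ W := by
          intro hmem
          apply hvW
          have hveq : v = u + (u + v) := by rw [← add_assoc, add_self_zmod2, zero_add]
          rw [hveq]; exact add_mem huW hmem
        have h2 : W ⊔ Submodule.span (ZMod 2) {u} = W := sup_eq_of_mem huW
        have h2' : finrank (ZMod 2) ↥(W ⊔ Submodule.span (ZMod 2) {u + v})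
            = finrank (ZMod 2) W + 1 := fr_eq_succ_of_not_mem huv
        rw [h4, h3v, h2, h2']
        exact GB i (finrank (ZMod 2) W) hi
      · have huW : u ∉ W := by
          intro hmem
          apply hvW
          have hveq : v = u + (u + v) := by rw [← add_assoc, add_self_zmod2, zero_add]
          rw [hveq]; exact add_mem hmem huvW
        have h2 : finrank (ZMod 2) ↥(W ⊔ Submodule.span (ZMod 2) {u})
            = finrank (ZMod 2) W + 1 := fr_eq_succ_of_not_mem huW
        have h2' : W ⊔ Submodule.span (ZMod 2) {u + v} = W := sup_eq_of_mem huvW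
        rw [h4, h3v, h2, h2']
        linarith [GB i (finrank (ZMod 2) W) hi]
    · have huW : u ∉ W := fun hmem => huWv (Submodule.mem_sup_left hmem)
      have huvW : u + v ∉ W := by
        intro hmem
        apply huWv
        have hueq : u = (u + v) + v := by rw [add_assoc, add_self_zmod2, add_zero]
        rw [hueq]
        exact add_mem (Submodule.mem_sup_left hmem)
          (Submodule.mem_sup_right (Submodule.mem_span_singleton_self v))
      have h4 : finrank (ZMod 2)
          ↥((W ⊔ Submodule.span (ZMod 2) {v}) ⊔ Submodule.span (ZMod 2) {u})
          = finrank (ZMod 2) W + 2 := by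
        rw [fr_eq_succ_of_not_mem huWv, h3v]
      have h2 : finrank (ZMod 2) ↥(W ⊔ Submodule.span (ZMod 2) {u})
          = finrank (ZMod 2) W + 1 := fr_eq_succ_of_not_mem huW
      have h2' : finrank (ZMod 2) ↥(W ⊔ Submodule.span (ZMod 2) {u + v})
          = finrank (ZMod 2) W + 1 := fr_eq_succ_of_not_mem huvW
      rw [h4, h3v, h2, h2']
      linarith [GC i (finrank (ZMod 2) W) hi]

----------------------------------------------------------------
-- counting machinery
----------------------------------------------------------------

/-- Splitting off the last coordinate of a tuple. -/
def splitEquiv (n n' : ℕ) (h : n = n' + 1) :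
    (Fin n → ZMod 2) ≃ (Fin n' → ZMod 2) × ZMod 2 where
  toFun g := (fun x => g ⟨(x : ℕ), by omega⟩, g ⟨n', by omega⟩)
  invFun q x := if hx : (x : ℕ) < n' then q.1 ⟨(x : ℕ), hx⟩ else q.2
  left_inv g := by
    funext x
    by_cases hx : (x : ℕ) < n'
    · simp only [dif_pos hx]
    · simp only [dif_neg hx]
      have hx' : (x : ℕ) = n' := by have := x.isLt; omega
      exact congrArg g (Fin.ext hx'.symm)
  right_inv q := by
    refine Prod.ext ?_ ?_
    · funext x
      simp only [dif_pos x.isLt]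
    · simp only [dif_neg (lt_irrefl n')]

lemma card_fst {A A' B : Type*} (E : A ≃ A' × ZMod 2) (f : A → A')
    (hf : ∀ a, (E a).1 = f a) (Q : A' → B → Prop) :
    Nat.card {p : A × B // Q (f p.1) p.2} = 2 * Nat.card {q : A' × B // Q q.1 q.2} := by
  have e : {p : A × B // Q (f p.1) p.2} ≃ {q : A' × B // Q q.1 q.2} × ZMod 2 :=
    { toFun := fun p => (⟨((E p.1.1).1, p.1.2), by rw [hf]; exact p.2⟩, (E p.1.1).2)
      invFun := fun qc => ⟨(E.symm (qc.1.1.1, qc.2), qc.1.1.2), by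
        have h2 := hf (E.symm (qc.1.1.1, qc.2))
        rw [← h2, Equiv.apply_symm_apply]
        exact qc.1.2⟩
      left_inv := fun p => by
        apply Subtype.ext
        show (E.symm ((E p.1.1).1, (E p.1.1).2), p.1.2) = p.1
        rw [Prod.mk.eta, Equiv.symm_apply_apply, Prod.mk.eta]
      right_inv := fun qc => by
        refine Prod.ext (Subtype.ext ?_) ?_
        · show ((E (E.symm (qc.1.1.1, qc.2))).1, qc.1.1.2) = qc.1.1
          rw [Equiv.apply_symm_apply]
        · show (E (E.symm (qc.1.1.1, qc.2))).2 = qc.2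
          rw [Equiv.apply_symm_apply] }
  rw [Nat.card_congr e, Nat.card_prod, Nat.card_zmod, mul_comm]

lemma card_snd {A B B' : Type*} (E : B ≃ B' × ZMod 2) (f : B → B')
    (hf : ∀ b, (E b).1 = f b) (Q : A → B' → Prop) :
    Nat.card {p : A × B // Q p.1 (f p.2)} = 2 * Nat.card {q : A × B' // Q q.1 q.2} := by
  have e1 : {p : A × B // Q p.1 (f p.2)} ≃ {p : B × A // Q p.2 (f p.1)} :=
    ⟨fun p => ⟨(p.1.2, p.1.1), p.2⟩, fun p => ⟨(p.1.2, p.1.1), p.2⟩,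
      fun p => rfl, fun p => rfl⟩
  have e2 : {q : A × B' // Q q.1 q.2} ≃ {q : B' × A // Q q.2 q.1} :=
    ⟨fun p => ⟨(p.1.2, p.1.1), p.2⟩, fun p => ⟨(p.1.2, p.1.1), p.2⟩,
      fun p => rfl, fun p => rfl⟩
  rw [Nat.card_congr e1, Nat.card_congr e2]
  exact card_fst E f hf (fun b' a => Q a b')

lemma card_sum {P : Type*} [Fintype P] (Q : P → Prop) [DecidablePred Q] :
    (Nat.card {p : P // Q p} : ℤ) = ∑ p : P, if Q p then (1 : ℤ) else 0 := by
  rw [Nat.card_eq_fintype_card, Fintype.card_subtype, Finset.card_filter]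
  push_cast
  exact Finset.sum_congr rfl fun p _ => by split_ifs <;> simp

----------------------------------------------------------------
-- matrix identifications
----------------------------------------------------------------

/-- forget the last coordinate of `α`. -/
def trA (s k : ℕ) (α : Fin (s + k - 1) → ZMod 2) : Fin (s - 1 + k - 1) → ZMod 2 :=
  fun x => α ⟨(x : ℕ), by have := x.isLt; omega⟩

/-- forget the last coordinate of `β`. -/
def trB (s m k : ℕ) (β : Fin (s + m + k - 1) → ZMod 2) : Fin (s + m - 1 + k - 1) → ZMod 2 :=
  fun x => β ⟨(x : ℕ), by have := x.isLt; omega⟩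

lemma mat_full (s m k : ℕ) (α : Fin (s + k - 1) → ZMod 2) (β : Fin (s + m + k - 1) → ZMod 2) :
    subMat s m k s (s + m) k α β = Matrix.fromRows (hankel s k α) (hankel (s + m) k β) := by
  ext r j
  cases r with
  | inl i =>
    show (if h : (i : ℕ) + (j : ℕ) < s + k - 1 then α ⟨(i : ℕ) + (j : ℕ), h⟩ else 0) = α _
    rw [dif_pos (show (i : ℕ) + (j : ℕ) < s + k - 1 by have := i.isLt; have := j.isLt; omega)]
  | inr i =>
    show (if h : (i : ℕ) + (j : ℕ) < s + m + k - 1 then β ⟨(i : ℕ) + (j : ℕ), h⟩ else 0) = β _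
    rw [dif_pos (show (i : ℕ) + (j : ℕ) < s + m + k - 1 by have := i.isLt; have := j.isLt; omega)]

lemma mat_r3 (s m k : ℕ) (hs : 2 ≤ s) (α : Fin (s + k - 1) → ZMod 2)
    (β : Fin (s + m + k - 1) → ZMod 2) :
    subMat s m k (s - 1) (s + m) k α β
      = Matrix.fromRows (hankel (s - 1) k (trA s k α)) (hankel (s + m) k β) := by
  ext r j
  cases r with
  | inl i =>
    show (if h : (i : ℕ) + (j : ℕ) < s + k - 1 then α ⟨(i : ℕ) + (j : ℕ), h⟩ else 0) = trA s k α _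
    rw [dif_pos (show (i : ℕ) + (j : ℕ) < s + k - 1 by have := i.isLt; have := j.isLt; omega)]
    rfl
  | inr i =>
    show (if h : (i : ℕ) + (j : ℕ) < s + m + k - 1 then β ⟨(i : ℕ) + (j : ℕ), h⟩ else 0) = β _
    rw [dif_pos (show (i : ℕ) + (j : ℕ) < s + m + k - 1 by have := i.isLt; have := j.isLt; omega)]

lemma mat_r2 (s m k : ℕ) (hs : 2 ≤ s) (α : Fin (s + k - 1) → ZMod 2)
    (β : Fin (s + m + k - 1) → ZMod 2) :
    subMat s m k s (s + m - 1) k α β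
      = Matrix.fromRows (hankel s k α) (hankel (s + m - 1) k (trB s m k β)) := by
  ext r j
  cases r with
  | inl i =>
    show (if h : (i : ℕ) + (j : ℕ) < s + k - 1 then α ⟨(i : ℕ) + (j : ℕ), h⟩ else 0) = α _
    rw [dif_pos (show (i : ℕ) + (j : ℕ) < s + k - 1 by have := i.isLt; have := j.isLt; omega)]
  | inr i =>
    show (if h : (i : ℕ) + (j : ℕ) < s + m + k - 1 then β ⟨(i : ℕ) + (j : ℕ), h⟩ else 0)
      = trB s m k β _
    rw [dif_pos (show (i : ℕ) + (j : ℕ) < s + m + k - 1 by have := i.isLt; have := j.isLt; omega)]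
    rfl

lemma mat_r1 (s m k : ℕ) (hs : 2 ≤ s) (α : Fin (s + k - 1) → ZMod 2)
    (β : Fin (s + m + k - 1) → ZMod 2) :
    subMat s m k (s - 1) (s + m - 1) k α β
      = Matrix.fromRows (hankel (s - 1) k (trA s k α)) (hankel (s + m - 1) k (trB s m k β)) := by
  ext r j
  cases r with
  | inl i =>
    show (if h : (i : ℕ) + (j : ℕ) < s + k - 1 then α ⟨(i : ℕ) + (j : ℕ), h⟩ else 0) = trA s k α _
    rw [dif_pos (show (i : ℕ) + (j : ℕ) < s + k - 1 by have := i.isLt; have := j.isLt; omega)]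
    rfl
  | inr i =>
    show (if h : (i : ℕ) + (j : ℕ) < s + m + k - 1 then β ⟨(i : ℕ) + (j : ℕ), h⟩ else 0)
      = trB s m k β _
    rw [dif_pos (show (i : ℕ) + (j : ℕ) < s + m + k - 1 by have := i.isLt; have := j.isLt; omega)]
    rfl

lemma subRank_full_eq (s m k : ℕ) (α : Fin (s + k - 1) → ZMod 2)
    (β : Fin (s + m + k - 1) → ZMod 2) :
    subRank s m k s (s + m) k α β
      = (Matrix.fromRows (hankel s k α) (hankel (s + m) k β)).rank := by
  unfold subRank; rw [mat_full]

lemma subRank_r3_eq (s m k : ℕ) (hs : 2 ≤ s) (α : Fin (s + k - 1) → ZMod 2)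
    (β : Fin (s + m + k - 1) → ZMod 2) :
    subRank s m k (s - 1) (s + m) k α β
      = (Matrix.fromRows (hankel (s - 1) k (trA s k α)) (hankel (s + m) k β)).rank := by
  unfold subRank; rw [mat_r3 s m k hs]

lemma subRank_r2_eq (s m k : ℕ) (hs : 2 ≤ s) (α : Fin (s + k - 1) → ZMod 2)
    (β : Fin (s + m + k - 1) → ZMod 2) :
    subRank s m k s (s + m - 1) k α β
      = (Matrix.fromRows (hankel s k α) (hankel (s + m - 1) k (trB s m k β))).rank := by
  unfold subRank; rw [mat_r2 s m k hs]

lemma subRank_r1_eq (s m k : ℕ) (hs : 2 ≤ s) (α : Fin (s + k - 1) → ZMod 2)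
    (β : Fin (s + m + k - 1) → ZMod 2) :
    subRank s m k (s - 1) (s + m - 1) k α β
      = (Matrix.fromRows (hankel (s - 1) k (trA s k α))
          (hankel (s + m - 1) k (trB s m k β))).rank := by
  unfold subRank; rw [mat_r1 s m k hs]

end GammaRec

open GammaRec in
private theorem Gamma_recurrence_aux (s m k i : ℕ) (hs : 2 ≤ s) (hk : 1 ≤ k) (hi1 : 2 ≤ i)
    (hi2 : i ≤ min (2 * s + m) k) :
    (Gamma s (s + m) k i : ℤ) =
      2 * Gamma (s - 1) (s + m) k (i - 1) + 4 * Gamma s (s + m - 1) k (i - 1)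
        - 8 * Gamma (s - 1) (s + m - 1) k (i - 2)
        + sigma3 s m k i - 3 * sigma3 s m k (i - 1) + 2 * sigma3 s m k (i - 2) := by
  have Hf : (Gamma s (s + m) k i : ℤ)
      = ∑ p : (Fin (s + k - 1) → ZMod 2) × (Fin (s + m + k - 1) → ZMod 2),
          if subRank s m k s (s + m) k p.1 p.2 = i then (1 : ℤ) else 0 := by
    have h0 : Gamma s (s + m) k i
        = Nat.card {p : (Fin (s + k - 1) → ZMod 2) × (Fin (s + m + k - 1) → ZMod 2) //
            subRank s m k s (s + m) k p.1 p.2 = i} :=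
      Nat.card_congr (Equiv.subtypeEquivRight fun p => by rw [subRank_full_eq])
    have hc := card_sum
      (fun p : (Fin (s + k - 1) → ZMod 2) × (Fin (s + m + k - 1) → ZMod 2) =>
        subRank s m k s (s + m) k p.1 p.2 = i)
    rw [h0]
    exact hc
  have H3 : 2 * ((Gamma (s - 1) (s + m) k (i - 1) : ℕ) : ℤ)
      = ∑ p : (Fin (s + k - 1) → ZMod 2) × (Fin (s + m + k - 1) → ZMod 2),
          if subRank s m k (s - 1) (s + m) k p.1 p.2 = i - 1 then (1 : ℤ) else 0 := by
    have h0 : Nat.card {p : (Fin (s + k - 1) → ZMod 2) × (Fin (s + m + k - 1) → ZMod 2) //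
        subRank s m k (s - 1) (s + m) k p.1 p.2 = i - 1}
        = 2 * Gamma (s - 1) (s + m) k (i - 1) := by
      have h1 : Nat.card {p : (Fin (s + k - 1) → ZMod 2) × (Fin (s + m + k - 1) → ZMod 2) //
          subRank s m k (s - 1) (s + m) k p.1 p.2 = i - 1}
          = Nat.card {p : (Fin (s + k - 1) → ZMod 2) × (Fin (s + m + k - 1) → ZMod 2) //
            (Matrix.fromRows (hankel (s - 1) k (trA s k p.1))
              (hankel (s + m) k p.2)).rank = i - 1} :=
        Nat.card_congr (Equiv.subtypeEquivRight fun p => by rw [subRank_r3_eq s m k hs])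
      rw [h1]
      exact card_fst (splitEquiv (s + k - 1) (s - 1 + k - 1) (by omega)) (trA s k)
        (fun a => rfl)
        (fun a' b => (Matrix.fromRows (hankel (s - 1) k a') (hankel (s + m) k b)).rank = i - 1)
    have hc := card_sum
      (fun p : (Fin (s + k - 1) → ZMod 2) × (Fin (s + m + k - 1) → ZMod 2) =>
        subRank s m k (s - 1) (s + m) k p.1 p.2 = i - 1)
    rw [h0] at hc
    push_cast at hc
    linarith [hc]
  have H2 : 4 * ((Gamma s (s + m - 1) k (i - 1) : ℕ) : ℤ)
      = 2 * ∑ p : (Fin (s + k - 1) → ZMod 2) × (Fin (s + m + k - 1) → ZMod 2),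
          if subRank s m k s (s + m - 1) k p.1 p.2 = i - 1 then (1 : ℤ) else 0 := by
    have h0 : Nat.card {p : (Fin (s + k - 1) → ZMod 2) × (Fin (s + m + k - 1) → ZMod 2) //
        subRank s m k s (s + m - 1) k p.1 p.2 = i - 1}
        = 2 * Gamma s (s + m - 1) k (i - 1) := by
      have h1 : Nat.card {p : (Fin (s + k - 1) → ZMod 2) × (Fin (s + m + k - 1) → ZMod 2) //
          subRank s m k s (s + m - 1) k p.1 p.2 = i - 1}
          = Nat.card {p : (Fin (s + k - 1) → ZMod 2) × (Fin (s + m + k - 1) → ZMod 2) //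
            (Matrix.fromRows (hankel s k p.1)
              (hankel (s + m - 1) k (trB s m k p.2))).rank = i - 1} :=
        Nat.card_congr (Equiv.subtypeEquivRight fun p => by rw [subRank_r2_eq s m k hs])
      rw [h1]
      exact card_snd (splitEquiv (s + m + k - 1) (s + m - 1 + k - 1) (by omega)) (trB s m k)
        (fun b => rfl)
        (fun a b' => (Matrix.fromRows (hankel s k a) (hankel (s + m - 1) k b')).rank = i - 1)
    have hc := card_sum
      (fun p : (Fin (s + k - 1) → ZMod 2) × (Fin (s + m + k - 1) → ZMod 2) =>
        subRank s m k s (s + m - 1) k p.1 p.2 = i - 1)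
    rw [h0] at hc
    push_cast at hc
    linarith [hc]
  have H1 : 8 * ((Gamma (s - 1) (s + m - 1) k (i - 2) : ℕ) : ℤ)
      = 2 * ∑ p : (Fin (s + k - 1) → ZMod 2) × (Fin (s + m + k - 1) → ZMod 2),
          if subRank s m k (s - 1) (s + m - 1) k p.1 p.2 = i - 2 then (1 : ℤ) else 0 := by
    have h0 : Nat.card {p : (Fin (s + k - 1) → ZMod 2) × (Fin (s + m + k - 1) → ZMod 2) //
        subRank s m k (s - 1) (s + m - 1) k p.1 p.2 = i - 2}
        = 4 * Gamma (s - 1) (s + m - 1) k (i - 2) := by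
      have h1 : Nat.card {p : (Fin (s + k - 1) → ZMod 2) × (Fin (s + m + k - 1) → ZMod 2) //
          subRank s m k (s - 1) (s + m - 1) k p.1 p.2 = i - 2}
          = Nat.card {p : (Fin (s + k - 1) → ZMod 2) × (Fin (s + m + k - 1) → ZMod 2) //
            (Matrix.fromRows (hankel (s - 1) k (trA s k p.1))
              (hankel (s + m - 1) k (trB s m k p.2))).rank = i - 2} :=
        Nat.card_congr (Equiv.subtypeEquivRight fun p => by rw [subRank_r1_eq s m k hs])
      have h2 := card_fst (splitEquiv (s + k - 1) (s - 1 + k - 1) (by omega)) (trA s k)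
        (fun a => rfl)
        (fun a' (b : Fin (s + m + k - 1) → ZMod 2) =>
          (Matrix.fromRows (hankel (s - 1) k a')
            (hankel (s + m - 1) k (trB s m k b))).rank = i - 2)
      have h3 := card_snd (splitEquiv (s + m + k - 1) (s + m - 1 + k - 1) (by omega))
        (trB s m k) (fun b => rfl)
        (fun (a' : Fin (s - 1 + k - 1) → ZMod 2) b' =>
          (Matrix.fromRows (hankel (s - 1) k a') (hankel (s + m - 1) k b')).rank = i - 2)
      have h4 : Gamma (s - 1) (s + m - 1) k (i - 2)
          = Nat.card {q : (Fin (s - 1 + k - 1) → ZMod 2) × (Fin (s + m - 1 + k - 1) → ZMod 2) //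
              (Matrix.fromRows (hankel (s - 1) k q.1) (hankel (s + m - 1) k q.2)).rank
                = i - 2} := rfl
      rw [h1, h2, h3, h4]
      ring
    have hc := card_sum
      (fun p : (Fin (s + k - 1) → ZMod 2) × (Fin (s + m + k - 1) → ZMod 2) =>
        subRank s m k (s - 1) (s + m - 1) k p.1 p.2 = i - 2)
    rw [h0] at hc
    push_cast at hc
    linarith [hc]
  have Hσ : ∀ j : ℕ, ((sigma3 s m k j : ℕ) : ℤ)
      = ∑ p : (Fin (s + k - 1) → ZMod 2) × (Fin (s + m + k - 1) → ZMod 2),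
          if (subRank s m k (s - 1) (s + m - 1) k p.1 p.2 = j ∧
              subRank s m k s (s + m - 1) k p.1 p.2 = j ∧
              subRank s m k s (s + m) k p.1 p.2 = j) then (1 : ℤ) else 0 := by
    intro j
    exact card_sum _
  have key : ∑ p : (Fin (s + k - 1) → ZMod 2) × (Fin (s + m + k - 1) → ZMod 2),
      Gfun i (subRank s m k (s - 1) (s + m - 1) k p.1 p.2)
        (subRank s m k s (s + m - 1) k p.1 p.2)
        (subRank s m k (s - 1) (s + m) k p.1 p.2)
        (subRank s m k s (s + m) k p.1 p.2) = 0 := by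
    set F : (Fin (s + k - 1) → ZMod 2) × (Fin (s + m + k - 1) → ZMod 2) → ℤ :=
      fun p => Gfun i (subRank s m k (s - 1) (s + m - 1) k p.1 p.2)
        (subRank s m k s (s + m - 1) k p.1 p.2)
        (subRank s m k (s - 1) (s + m) k p.1 p.2)
        (subRank s m k s (s + m) k p.1 p.2) with hF
    have hinv : Function.Involutive
        (fun p : (Fin (s + k - 1) → ZMod 2) × (Fin (s + m + k - 1) → ZMod 2) =>
          (p.1 + shift s m k p.2, p.2)) := by
      intro p
      exact Prod.ext (add_shift_shift s m k p.1 p.2) rfl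
    have hsum : ∑ p, F p = ∑ p, F (Function.Involutive.toPerm _ hinv p) :=
      (Equiv.sum_comp (Function.Involutive.toPerm _ hinv) F).symm
    have hzero : ∀ p : (Fin (s + k - 1) → ZMod 2) × (Fin (s + m + k - 1) → ZMod 2),
        F p + F (Function.Involutive.toPerm _ hinv p) = 0 := by
      intro p
      exact pointwise s m k i hs hi1 p.1 p.2
    have h2 : (2 : ℤ) * ∑ p, F p = 0 := by
      rw [two_mul]
      nth_rewrite 2 [hsum]
      rw [← Finset.sum_add_distrib]
      simp only [hzero, Finset.sum_const_zero]
    linarith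
  have expand : ∑ p : (Fin (s + k - 1) → ZMod 2) × (Fin (s + m + k - 1) → ZMod 2),
      Gfun i (subRank s m k (s - 1) (s + m - 1) k p.1 p.2)
        (subRank s m k s (s + m - 1) k p.1 p.2)
        (subRank s m k (s - 1) (s + m) k p.1 p.2)
        (subRank s m k s (s + m) k p.1 p.2)
      = (∑ p : (Fin (s + k - 1) → ZMod 2) × (Fin (s + m + k - 1) → ZMod 2),
          if subRank s m k s (s + m) k p.1 p.2 = i then (1 : ℤ) else 0)
        - (∑ p : (Fin (s + k - 1) → ZMod 2) × (Fin (s + m + k - 1) → ZMod 2),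
          if subRank s m k (s - 1) (s + m) k p.1 p.2 = i - 1 then (1 : ℤ) else 0)
        - 2 * (∑ p : (Fin (s + k - 1) → ZMod 2) × (Fin (s + m + k - 1) → ZMod 2),
          if subRank s m k s (s + m - 1) k p.1 p.2 = i - 1 then (1 : ℤ) else 0)
        + 2 * (∑ p : (Fin (s + k - 1) → ZMod 2) × (Fin (s + m + k - 1) → ZMod 2),
          if subRank s m k (s - 1) (s + m - 1) k p.1 p.2 = i - 2 then (1 : ℤ) else 0)
        - (∑ p : (Fin (s + k - 1) → ZMod 2) × (Fin (s + m + k - 1) → ZMod 2),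
          if (subRank s m k (s - 1) (s + m - 1) k p.1 p.2 = i ∧
              subRank s m k s (s + m - 1) k p.1 p.2 = i ∧
              subRank s m k s (s + m) k p.1 p.2 = i) then (1 : ℤ) else 0)
        + 3 * (∑ p : (Fin (s + k - 1) → ZMod 2) × (Fin (s + m + k - 1) → ZMod 2),
          if (subRank s m k (s - 1) (s + m - 1) k p.1 p.2 = i - 1 ∧
              subRank s m k s (s + m - 1) k p.1 p.2 = i - 1 ∧
              subRank s m k s (s + m) k p.1 p.2 = i - 1) then (1 : ℤ) else 0)
        - 2 * (∑ p : (Fin (s + k - 1) → ZMod 2) × (Fin (s + m + k - 1) → ZMod 2),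
          if (subRank s m k (s - 1) (s + m - 1) k p.1 p.2 = i - 2 ∧
              subRank s m k s (s + m - 1) k p.1 p.2 = i - 2 ∧
              subRank s m k s (s + m) k p.1 p.2 = i - 2) then (1 : ℤ) else 0) := by
    simp only [Gfun, Finset.sum_add_distrib, Finset.sum_sub_distrib, ← Finset.mul_sum]
  rw [expand] at key
  linarith [Hf, H3, H2, H1, Hσ i, Hσ (i - 1), Hσ (i - 2), key]


/-- the recurrent formula for `Γ_i^{[s,s+m]×k}`. -/
theorem Gamma_recurrence (s m k i : ℕ) (hs : 2 ≤ s) (hk : 1 ≤ k) (hi1 : 2 ≤ i)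
    (hi2 : i ≤ min (2 * s + m) k) :
    (Gamma s (s + m) k i : ℤ) =
      2 * Gamma (s - 1) (s + m) k (i - 1) + 4 * Gamma s (s + m - 1) k (i - 1)
        - 8 * Gamma (s - 1) (s + m - 1) k (i - 2)
        + sigma3 s m k i - 3 * sigma3 s m k (i - 1) + 2 * sigma3 s m k (i - 2) := by
  exact Gamma_recurrence_aux s m k i hs hk hi1 hi2
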